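/- For every fixed x > 0, as t → 0⁺ one has the sharp tail asymptotic γ_t([x,∞)) = (e^{bx/ξ²}/Γ(μ)) · (2x/ξ²)^{μ−1} · t^{1−μ} · e^{−2x/(ξ² t)} · (1 + O(t)). -/

import Mathlib

open MeasureTheory Filter Topology Real Set ProbabilityTheory

lemma aux_integral_exp (a x : ℝ) (ha : 0 < a) :
    ∫ z in Ioi x, Real.exp (-(a * z)) = Real.exp (-(a * x)) / a := by
  have h := MeasureTheory.integral_comp_mul_left_Ioi (fun y => Real.exp (-y)) x ha
  simp only [smul_eq_mul] at h
  rw [h, integral_exp_neg_Ioi]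
  ring

lemma aux_integrable_exp (a x : ℝ) (ha : 0 < a) :
    IntegrableOn (fun z => Real.exp (-(a * z))) (Ioi x) := by
  have := exp_neg_integrableOn_Ioi x ha
  simpa [neg_mul] using this

-- sandwich lemma
lemma aux_tail (x μ lam : ℝ) (hx : 0 < x) (hμ : 1 < μ)
    (hlam : 2 * ((μ - 1) / x) ≤ lam) :
    |(∫ z in Ioi x, z ^ (μ - 1) * Real.exp (-(lam * z)))
        - x ^ (μ - 1) * Real.exp (-(lam * x)) / lam|
      ≤ (2 * ((μ - 1) / x) / lam) * (x ^ (μ - 1) * Real.exp (-(lam * x)) / lam) := by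
  set c : ℝ := (μ - 1) / x with hc
  have hc0 : 0 < c := div_pos (by linarith) hx
  have hlam0 : 0 < lam := lt_of_lt_of_le (by linarith) hlam
  have hlc : 0 < lam - c := by linarith
  -- pointwise upper bound
  have hup : ∀ z ∈ Ioi x, z ^ (μ - 1) * Real.exp (-(lam * z))
      ≤ x ^ (μ - 1) * Real.exp (-(c * x)) * Real.exp (-((lam - c) * z)) := by
    intro z hz
    rw [mem_Ioi] at hz
    have hz0 : 0 < z := hx.trans hz
    have h1 : z ^ (μ - 1) ≤ x ^ (μ - 1) * Real.exp (c * (z - x)) := by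
      have hzx : z / x ≤ Real.exp (z / x - 1) := by
        have := Real.add_one_le_exp (z / x - 1); linarith
      have h2 : (z / x) ^ (μ - 1) ≤ Real.exp (z / x - 1) ^ (μ - 1) :=
        Real.rpow_le_rpow (by positivity) hzx (by linarith)
      rw [← Real.exp_mul] at h2
      have h3 : (z / x - 1) * (μ - 1) = c * (z - x) := by
        rw [hc]; field_simp
      rw [h3] at h2
      have h4 : (z / x) ^ (μ - 1) = z ^ (μ - 1) / x ^ (μ - 1) :=
        Real.div_rpow hz0.le hx.le (μ - 1)
      rw [h4, div_le_iff₀ (by positivity)] at h2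
      linarith [h2]
    calc z ^ (μ - 1) * Real.exp (-(lam * z))
        ≤ (x ^ (μ - 1) * Real.exp (c * (z - x))) * Real.exp (-(lam * z)) := by
          apply mul_le_mul_of_nonneg_right h1 (Real.exp_pos _).le
      _ = x ^ (μ - 1) * Real.exp (-(c * x)) * Real.exp (-((lam - c) * z)) := by
          rw [mul_assoc, mul_assoc, ← Real.exp_add, ← Real.exp_add]
          ring_nf
  -- pointwise lower bound
  have hlo : ∀ z ∈ Ioi x, x ^ (μ - 1) * Real.exp (-(lam * z))
      ≤ z ^ (μ - 1) * Real.exp (-(lam * z)) := by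
    intro z hz
    rw [mem_Ioi] at hz
    exact mul_le_mul_of_nonneg_right
      (Real.rpow_le_rpow hx.le hz.le (by linarith)) (Real.exp_pos _).le
  -- integrabilities
  have hintu : IntegrableOn
      (fun z => x ^ (μ - 1) * Real.exp (-(c * x)) * Real.exp (-((lam - c) * z))) (Ioi x) :=
    (aux_integrable_exp (lam - c) x hlc).const_mul _
  have hintl : IntegrableOn (fun z => x ^ (μ - 1) * Real.exp (-(lam * z))) (Ioi x) :=
    (aux_integrable_exp lam x hlam0).const_mul _
  have hmeas : AEStronglyMeasurable (fun z => z ^ (μ - 1) * Real.exp (-(lam * z)))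
      (volume.restrict (Ioi x)) := by
    apply Measurable.aestronglyMeasurable
    fun_prop
  have hintf : IntegrableOn (fun z => z ^ (μ - 1) * Real.exp (-(lam * z))) (Ioi x) := by
    apply Integrable.mono' hintu hmeas
    rw [ae_restrict_iff' measurableSet_Ioi]
    filter_upwards with z hz
    have hz0 : 0 < z := hx.trans hz
    rw [Real.norm_eq_abs,
      abs_of_nonneg (mul_nonneg (Real.rpow_nonneg hz0.le _) (Real.exp_pos _).le)]
    exact hup z hz
  -- integral bounds
  have hIu : (∫ z in Ioi x, z ^ (μ - 1) * Real.exp (-(lam * z)))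
      ≤ x ^ (μ - 1) * Real.exp (-(lam * x)) / (lam - c) := by
    calc (∫ z in Ioi x, z ^ (μ - 1) * Real.exp (-(lam * z)))
        ≤ ∫ z in Ioi x, x ^ (μ - 1) * Real.exp (-(c * x)) * Real.exp (-((lam - c) * z)) :=
          setIntegral_mono_on hintf hintu measurableSet_Ioi hup
      _ = x ^ (μ - 1) * Real.exp (-(c * x)) * (Real.exp (-((lam - c) * x)) / (lam - c)) := by
          rw [MeasureTheory.integral_const_mul, aux_integral_exp _ _ hlc]
      _ = x ^ (μ - 1) * Real.exp (-(lam * x)) / (lam - c) := by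
          have hee : Real.exp (-(c * x)) * Real.exp (-((lam - c) * x))
              = Real.exp (-(lam * x)) := by
            rw [← Real.exp_add]; congr 1; ring
          calc x ^ (μ - 1) * Real.exp (-(c * x)) * (Real.exp (-((lam - c) * x)) / (lam - c))
              = x ^ (μ - 1) * (Real.exp (-(c * x)) * Real.exp (-((lam - c) * x))) / (lam - c) := by
                ring
            _ = _ := by rw [hee]
  have hIl : x ^ (μ - 1) * Real.exp (-(lam * x)) / lam
      ≤ ∫ z in Ioi x, z ^ (μ - 1) * Real.exp (-(lam * z)) := by
    calc x ^ (μ - 1) * Real.exp (-(lam * x)) / lam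
        = ∫ z in Ioi x, x ^ (μ - 1) * Real.exp (-(lam * z)) := by
          rw [MeasureTheory.integral_const_mul, aux_integral_exp _ _ hlam0, mul_div_assoc]
      _ ≤ _ := setIntegral_mono_on hintl hintf measurableSet_Ioi hlo
  -- combine
  have hA : 0 < x ^ (μ - 1) * Real.exp (-(lam * x)) := by positivity
  set A := x ^ (μ - 1) * Real.exp (-(lam * x)) with hA_def
  have hgap : A / (lam - c) - A / lam ≤ 2 * c / lam * (A / lam) := by
    rw [div_sub_div _ _ hlc.ne' hlam0.ne']
    have hnum : A * lam - (lam - c) * A = A * c := by ring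
    rw [hnum]
    have hrhs : 2 * c / lam * (A / lam) = 2 * A * c / (lam * lam) := by ring
    rw [hrhs, div_le_div_iff₀ (by positivity) (by positivity)]
    nlinarith [mul_nonneg (mul_nonneg (mul_nonneg hA.le hc0.le) hlam0.le)
      (by linarith : (0:ℝ) ≤ lam - 2 * c)]
  have hpos : 0 ≤ 2 * c / lam * (A / lam) := by positivity
  rw [abs_le]
  constructor
  · linarith
  · linarith

lemma aux_integrable_exp' (a x : ℝ) (ha : 0 < a) :
    IntegrableOn (fun z => Real.exp (-(a * z))) (Ioi x) := by
  have := exp_neg_integrableOn_Ioi x ha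
  simpa [neg_mul] using this

lemma aux_integrable_tail (x μ lam : ℝ) (hx : 0 < x) (hμ : 1 < μ)
    (hlam : 2 * ((μ - 1) / x) ≤ lam) :
    IntegrableOn (fun z => z ^ (μ - 1) * Real.exp (-(lam * z))) (Ioi x) := by
  set c : ℝ := (μ - 1) / x with hc
  have hc0 : 0 < c := div_pos (by linarith) hx
  have hlam0 : 0 < lam := lt_of_lt_of_le (by linarith) hlam
  have hlc : 0 < lam - c := by linarith
  have hup : ∀ z ∈ Ioi x, z ^ (μ - 1) * Real.exp (-(lam * z))
      ≤ x ^ (μ - 1) * Real.exp (-(c * x)) * Real.exp (-((lam - c) * z)) := by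
    intro z hz
    rw [mem_Ioi] at hz
    have hz0 : 0 < z := hx.trans hz
    have h1 : z ^ (μ - 1) ≤ x ^ (μ - 1) * Real.exp (c * (z - x)) := by
      have hzx : z / x ≤ Real.exp (z / x - 1) := by
        have := Real.add_one_le_exp (z / x - 1); linarith
      have h2 : (z / x) ^ (μ - 1) ≤ Real.exp (z / x - 1) ^ (μ - 1) :=
        Real.rpow_le_rpow (by positivity) hzx (by linarith)
      rw [← Real.exp_mul] at h2
      have h3 : (z / x - 1) * (μ - 1) = c * (z - x) := by
        rw [hc]; field_simp
      rw [h3] at h2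
      have h4 : (z / x) ^ (μ - 1) = z ^ (μ - 1) / x ^ (μ - 1) :=
        Real.div_rpow hz0.le hx.le (μ - 1)
      rw [h4, div_le_iff₀ (by positivity)] at h2
      linarith [h2]
    calc z ^ (μ - 1) * Real.exp (-(lam * z))
        ≤ (x ^ (μ - 1) * Real.exp (c * (z - x))) * Real.exp (-(lam * z)) := by
          apply mul_le_mul_of_nonneg_right h1 (Real.exp_pos _).le
      _ = x ^ (μ - 1) * Real.exp (-(c * x)) * Real.exp (-((lam - c) * z)) := by
          rw [mul_assoc, mul_assoc, ← Real.exp_add, ← Real.exp_add]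
          ring_nf
  have hintu : IntegrableOn
      (fun z => x ^ (μ - 1) * Real.exp (-(c * x)) * Real.exp (-((lam - c) * z))) (Ioi x) :=
    (aux_integrable_exp' (lam - c) x hlc).const_mul _
  have hmeas : AEStronglyMeasurable (fun z => z ^ (μ - 1) * Real.exp (-(lam * z)))
      (volume.restrict (Ioi x)) := by
    apply Measurable.aestronglyMeasurable
    fun_prop
  apply Integrable.mono' hintu hmeas
  rw [ae_restrict_iff' measurableSet_Ioi]
  filter_upwards with z hz
  have hz0 : 0 < z := hx.trans hz
  rw [Real.norm_eq_abs,
    abs_of_nonneg (mul_nonneg (Real.rpow_nonneg hz0.le _) (Real.exp_pos _).le)]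
  exact hup z hz

lemma aux_measure_Ici (μ lam x : ℝ) (hμ : 1 < μ) (hlam : 2 * ((μ - 1) / x) ≤ lam) (hx : 0 < x) :
    ((gammaMeasure μ lam) (Ici x)).toReal
      = lam ^ μ / Real.Gamma μ * ∫ z in Ioi x, z ^ (μ - 1) * Real.exp (-(lam * z)) := by
  have hc0 : 0 < (μ - 1) / x := div_pos (by linarith) hx
  have hlam0 : 0 < lam := by linarith
  rw [gammaMeasure, withDensity_apply _ measurableSet_Ici]
  rw [← setLIntegral_congr (α := ℝ) MeasureTheory.Ioi_ae_eq_Ici]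
  have hcong : ∀ z ∈ Ioi x, gammaPDF μ lam z
      = ENNReal.ofReal (lam ^ μ / Real.Gamma μ * (z ^ (μ - 1) * Real.exp (-(lam * z)))) := by
    intro z hz
    rw [gammaPDF_of_nonneg (le_of_lt (hx.trans hz)), mul_assoc]
  rw [setLIntegral_congr_fun measurableSet_Ioi hcong]
  rw [← MeasureTheory.ofReal_integral_eq_lintegral_ofReal]
  · rw [ENNReal.toReal_ofReal, MeasureTheory.integral_const_mul]
    apply setIntegral_nonneg measurableSet_Ioi
    intro z hz
    have hz0 : 0 < z := hx.trans hz
    have hG := Real.Gamma_pos_of_pos (by linarith : (0:ℝ) < μ)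
    positivity
  · exact (aux_integrable_tail x μ lam hx hμ hlam).const_mul _
  · rw [Filter.EventuallyLE, ae_restrict_iff' measurableSet_Ioi]
    filter_upwards with z hz
    have hz0 : 0 < z := hx.trans hz
    have hG := Real.Gamma_pos_of_pos (by linarith : (0:ℝ) < μ)
    have : (0:ℝ) ≤ lam ^ μ / Real.Gamma μ * (z ^ (μ - 1) * Real.exp (-(lam * z))) := by
      positivity
    exact this

lemma aux_s (s : ℝ) (hs0 : 0 < s) (hs : s ≤ 1/2) :
    1 - Real.exp (-s) ≤ s ∧ s/2 ≤ 1 - Real.exp (-s) ∧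
    |2*s - 2*(1 - Real.exp (-s)) - s*(1 - Real.exp (-s))| ≤ 2*s^3 ∧
    |Real.exp (-s) - 1 + s - s^2/2| ≤ 2/9 * s^3 := by
  have h1 := Real.add_one_le_exp (-s)
  have h3 : |Real.exp (-s) - 1 + s - s^2/2| ≤ 2/9 * s^3 := by
    have hb := Real.exp_bound (x := -s)
      (by rw [abs_neg, abs_of_nonneg hs0.le]; linarith) (n := 3) (by norm_num)
    simp [Finset.sum_range_succ, abs_neg, abs_of_nonneg hs0.le] at hb
    have : Real.exp (-s) - 1 + s - s^2/2 = Real.exp (-s) - (1 + -s + s^2/2) := by ring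
    rw [this]
    calc |Real.exp (-s) - (1 + -s + s^2/2)| ≤ s^3 * (4 / (6 * 3)) := by
          convert hb using 2 <;> ring
      _ ≤ 2/9 * s^3 := by nlinarith
  have h3' := abs_le.mp h3
  refine ⟨by linarith, by nlinarith, ?_, h3⟩
  rw [abs_le]
  constructor <;> nlinarith

lemma aux_rho (s q : ℝ) (hs0 : 0 < s) (hs : s ≤ 1/2)
    (h1 : q - 1 + s - s^2/2 ≤ 2/9 * s^3) (h2 : s/2 ≤ 1 - q) :
    s ≤ (1 + 2*s) * (1 - q) := by
  nlinarith [mul_le_mul_of_nonneg_left h2 (by positivity : (0:ℝ) ≤ 2*s),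
    mul_le_mul_of_nonneg_left hs (sq_nonneg s)]

lemma aux_final (V B₀ Tv q1 q2 d1 d2 d3 : ℝ)
    (hTv : 0 ≤ Tv) (hB : B₀ = Tv * (q1 * q2))
    (h1 : |q1 - 1| ≤ d1) (h2 : |q2 - 1| ≤ d2) (h3 : |V - B₀| ≤ d3 * B₀)
    (hd1 : d1 ≤ 1/2) (hd2 : d2 ≤ 1/2)
    (hd1' : 0 ≤ d1) (hd2' : 0 ≤ d2) (hd3 : 0 ≤ d3) :
    |V - Tv| ≤ 3 * (d1 + d2 + d3) * Tv := by
  have habsP : |q1 * q2 - 1| ≤ d1 + d2 + d1 * d2 := by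
    have hq : q1 * q2 - 1 = (q1 - 1) * (q2 - 1) + (q1 - 1) + (q2 - 1) := by ring
    rw [hq]
    calc |(q1 - 1) * (q2 - 1) + (q1 - 1) + (q2 - 1)|
        ≤ |(q1 - 1) * (q2 - 1)| + |q1 - 1| + |q2 - 1| :=
          le_trans (abs_add_le _ _) (add_le_add_left (abs_add_le _ _) _)
      _ ≤ d1 * d2 + d1 + d2 := by
          rw [abs_mul]
          exact add_le_add (add_le_add
            (mul_le_mul h1 h2 (abs_nonneg _) hd1') h1) h2
      _ = d1 + d2 + d1 * d2 := by ring
  have habsP' := abs_le.mp habsP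
  have hd12 : d1 * d2 ≤ d1 / 2 := by nlinarith
  have hBd : |B₀ - Tv| ≤ Tv * (d1 + d2 + d1 * d2) := by
    rw [hB, show Tv * (q1 * q2) - Tv = Tv * (q1 * q2 - 1) by ring, abs_mul,
      abs_of_nonneg hTv]
    exact mul_le_mul_of_nonneg_left habsP hTv
  have hB₀le : B₀ ≤ (9/4) * Tv := by
    rw [hB]
    nlinarith [habsP'.2, mul_le_mul_of_nonneg_left habsP'.2 hTv]
  calc |V - Tv| ≤ |V - B₀| + |B₀ - Tv| := abs_sub_le V B₀ Tv
    _ ≤ d3 * B₀ + Tv * (d1 + d2 + d1 * d2) := add_le_add h3 hBd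
    _ ≤ d3 * ((9/4) * Tv) + Tv * (d1 + d2 + d1 / 2) :=
        add_le_add (mul_le_mul_of_nonneg_left hB₀le hd3)
          (mul_le_mul_of_nonneg_left (by linarith) hTv)
    _ ≤ 3 * (d1 + d2 + d3) * Tv := by
        nlinarith [mul_nonneg hTv hd1', mul_nonneg hTv hd2', mul_nonneg hTv hd3]

set_option maxHeartbeats 1000000 in
/-- Sharp small-time tail asymptotics for the Gamma laws `γ_t`:
`γ_t([x,∞)) = (e^{bx/ξ²}/Γ(μ)) (2x/ξ²)^{μ-1} t^{1-μ} e^{-2x/(ξ²t)} (1 + O(t))` as `t → 0⁺`. -/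
theorem gamma_small_time_sharp_tail
    (a ξ b : ℝ) (ha : 0 < a) (hξ : 0 < ξ) (hb : b < 0)
    (μ : ℝ) (hμ_def : μ = 2 * a / ξ ^ 2) (hμ : 1 < μ)
    (lam : ℝ → ℝ) (hlam : ∀ t, lam t = -2 * b / (ξ ^ 2 * (1 - Real.exp (b * t))))
    (γ : ℝ → Measure ℝ)
    (hγ : ∀ t, 0 < t → γ t = ProbabilityTheory.gammaMeasure μ (lam t))
    (x : ℝ) (hx : 0 < x) :
    ∃ C > (0 : ℝ), ∃ t₀ > (0 : ℝ), ∀ t, 0 < t → t < t₀ →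
      |((γ t) (Set.Ici x)).toReal
          - Real.exp (b * x / ξ ^ 2) / Real.Gamma μ * (2 * x / ξ ^ 2) ^ (μ - 1)
            * t ^ (1 - μ) * Real.exp (-(2 * x) / (ξ ^ 2 * t))|
        ≤ C * t * (Real.exp (b * x / ξ ^ 2) / Real.Gamma μ * (2 * x / ξ ^ 2) ^ (μ - 1)
            * t ^ (1 - μ) * Real.exp (-(2 * x) / (ξ ^ 2 * t))) := by
  have hb' : 0 < -b := by linarith
  have hbne : b ≠ 0 := hb.ne
  have hξne : ξ ≠ 0 := hξ.ne'
  have hμ1 : (0:ℝ) < μ - 1 := by linarith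
  have hb2 : (0:ℝ) < b^2 := by nlinarith
  have hG : 0 < Real.Gamma μ := Real.Gamma_pos_of_pos (by linarith)
  set c : ℝ := (μ - 1) / x with hc_def
  have hc0 : 0 < c := div_pos (by linarith) hx
  set C₁ : ℝ := 4 * (μ - 1) * (-b) with hC₁_def
  set C₂ : ℝ := 8 * x * b^2 / ξ^2 with hC₂_def
  set C₃ : ℝ := (μ - 1) * ξ^2 / x with hC₃_def
  have hC₁ : 0 < C₁ := by rw [hC₁_def]; positivity
  have hC₂ : 0 < C₂ := by rw [hC₂_def]; positivity
  have hC₃ : 0 < C₃ := by rw [hC₃_def]; positivity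
  clear_value c C₁ C₂ C₃
  refine ⟨3 * (C₁ + C₂ + C₃), by positivity, ?_⟩
  set T1 : ℝ := 1 / (2 * (-b)) with hT1_def
  set T2 : ℝ := x / ((μ - 1) * ξ^2) with hT2_def
  set T3 : ℝ := 1 / (2 * (μ - 1) * (-b)) with hT3_def
  set T4 : ℝ := ξ^2 / (4 * x * b^2) with hT4_def
  set T5 : ℝ := 1 / (2 * C₁) with hT5_def
  set T6 : ℝ := 1 / (2 * C₂) with hT6_def
  set T7 : ℝ := 1 / (2 * C₃) with hT7_def
  have hT1 : 0 < T1 := by rw [hT1_def]; positivity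
  have hT2 : 0 < T2 := by rw [hT2_def]; positivity
  have hT3 : 0 < T3 := by rw [hT3_def]; positivity
  have hT4 : 0 < T4 := by rw [hT4_def]; positivity
  have hT5 : 0 < T5 := by rw [hT5_def]; positivity
  have hT6 : 0 < T6 := by rw [hT6_def]; positivity
  have hT7 : 0 < T7 := by rw [hT7_def]; positivity
  clear_value T1 T2 T3 T4 T5 T6 T7
  refine ⟨min T1 (min T2 (min T3 (min T4 (min T5 (min T6 T7))))),
    by simp only [lt_min_iff]; exact ⟨hT1, hT2, hT3, hT4, hT5, hT6, hT7⟩, ?_⟩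
  intro t ht ht'
  simp only [lt_min_iff] at ht'
  obtain ⟨h1, h2, h3, h4, h5, h6, h7⟩ := ht'
  have htne : t ≠ 0 := ht.ne'
  -- basic quantities
  set s : ℝ := -b * t with hs_def
  have hs0 : 0 < s := by rw [hs_def]; positivity
  have hs : s ≤ 1/2 := by
    rw [hT1_def, lt_div_iff₀ (by positivity)] at h1
    rw [hs_def]; linarith
  set D : ℝ := 1 - Real.exp (b * t) with hD_def
  clear_value s D
  have hbt : b * t = -s := by rw [hs_def]; ring
  have hDs : D = 1 - Real.exp (-s) := by rw [hD_def, hbt]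
  obtain ⟨hD_le, hD_ge, hnum, hN⟩ := aux_s s hs0 hs
  rw [← hDs] at hD_le hD_ge hnum
  have hD0 : 0 < D := by linarith
  have hlam_eq : lam t = -2 * b / (ξ^2 * D) := by rw [hlam t, hD_def]
  have hlm0 : 0 < lam t := by
    rw [hlam_eq]
    exact div_pos (by linarith) (by positivity)
  -- lambda bounds
  have hlm_lb : 2 / (ξ^2 * t) ≤ lam t := by
    rw [hlam_eq, div_le_div_iff₀ (by positivity) (by positivity)]
    have hrhs : -2*b * (ξ^2 * t) = 2 * (ξ^2 * s) := by rw [hs_def]; ring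
    rw [hrhs]
    have := mul_le_mul_of_nonneg_left hD_le (by positivity : (0:ℝ) ≤ ξ^2)
    linarith
  have hlm_ub : lam t ≤ 4 / (ξ^2 * t) := by
    rw [hlam_eq, div_le_div_iff₀ (by positivity) (by positivity)]
    have hlhs : -2*b * (ξ^2 * t) = 2 * (ξ^2 * s) := by rw [hs_def]; ring
    rw [hlhs]
    have := mul_le_mul_of_nonneg_left hD_ge (by positivity : (0:ℝ) ≤ 2*ξ^2)
    linarith
  have hlm2c : 2 * c ≤ lam t := by
    refine le_trans ?_ hlm_lb
    have h2' : t * ((μ - 1) * ξ^2) < x := by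
      rw [hT2_def, lt_div_iff₀ (by positivity)] at h2
      linarith
    rw [hc_def, mul_div_assoc', div_le_div_iff₀ hx (by positivity)]
    linarith
  -- rho
  set ρ : ℝ := lam t * ξ^2 * t / 2 with hρ_def
  clear_value ρ
  have hρ_eq : ρ = s / D := by
    rw [hρ_def, hlam_eq, hs_def]
    field_simp
  have hρ1 : 1 ≤ ρ := by
    rw [hρ_eq, le_div_iff₀ hD0]; linarith
  have hρ2 : ρ ≤ 1 + 2 * s := by
    rw [hρ_eq, div_le_iff₀ hD0, hDs]
    have hN' := abs_le.mp hN
    have hD_ge' : s / 2 ≤ 1 - Real.exp (-s) := hDs ▸ hD_ge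
    exact aux_rho s (Real.exp (-s)) hs0 hs hN'.2 hD_ge'
  -- E
  set E : ℝ := lam t * x - 2 * x / (ξ^2 * t) + b * x / ξ^2 with hE_def
  clear_value E
  have hE_eq : E = x / (ξ^2 * t * D) * (2*s - 2*D - s*D) := by
    rw [hE_def, hlam_eq, hs_def]
    field_simp
    ring
  have hE_bound : |E| ≤ 4 * x * b^2 / ξ^2 * t := by
    rw [hE_eq, abs_mul, abs_of_nonneg (by positivity : (0:ℝ) ≤ x / (ξ^2 * t * D))]
    calc x / (ξ^2 * t * D) * |2*s - 2*D - s*D| ≤ x / (ξ^2 * t * D) * (2 * s^3) :=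
          mul_le_mul_of_nonneg_left hnum (by positivity)
      _ ≤ 2 * x / (ξ^2 * t * s) * (2 * s^3) := by
          apply mul_le_mul_of_nonneg_right _ (by positivity)
          rw [div_le_div_iff₀ (by positivity) (by positivity)]
          have := mul_le_mul_of_nonneg_left hD_ge (by positivity : (0:ℝ) ≤ 2*x*(ξ^2*t))
          linarith
      _ = 4 * x * b^2 / ξ^2 * t := by
          rw [hs_def]
          field_simp
          ring

  -- q1 bounds
  set q1 : ℝ := ρ ^ (μ - 1) with hq1_def
  have hq1_ge : 1 ≤ q1 := by
    have h := Real.rpow_le_rpow zero_le_one hρ1 (le_of_lt hμ1)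
    rwa [Real.one_rpow] at h
  have h2s : 2 * s * (μ - 1) ≤ 1 := by
    rw [hT3_def, lt_div_iff₀ (by positivity)] at h3
    rw [hs_def]; linarith
  have hq1_ub : q1 ≤ Real.exp (2 * s * (μ - 1)) := by
    rw [hq1_def]
    calc ρ ^ (μ - 1) ≤ (Real.exp (2 * s)) ^ (μ - 1) :=
          Real.rpow_le_rpow (by linarith) (by linarith [Real.add_one_le_exp (2 * s)])
            (le_of_lt hμ1)
      _ = Real.exp (2 * s * (μ - 1)) := (Real.exp_mul _ _).symm
  have hy0 : (0:ℝ) ≤ 2 * s * (μ - 1) := by positivity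
  have habs1 := Real.abs_exp_sub_one_le (x := 2 * s * (μ - 1))
    (by rwa [abs_of_nonneg hy0])
  have hexp1 : Real.exp (2 * s * (μ - 1)) - 1 ≤ 2 * (2 * s * (μ - 1)) := by
    have := le_trans (le_abs_self _) habs1
    rwa [abs_of_nonneg hy0] at this
  have hδ1 : |q1 - 1| ≤ C₁ * t := by
    rw [abs_of_nonneg (by linarith)]
    have hCt : C₁ * t = 2 * (2 * s * (μ - 1)) := by rw [hC₁_def, hs_def]; ring
    rw [hCt]
    linarith
  have hf1' : C₁ * t ≤ 1/2 := by
    rw [hT5_def, lt_div_iff₀ (by positivity)] at h5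
    linarith
  clear_value q1
  -- q2 bounds
  have hE1 : |E| ≤ 1 := by
    have h4' : 4 * x * b^2 / ξ^2 * t ≤ 1 := by
      rw [hT4_def, lt_div_iff₀ (by positivity)] at h4
      rw [div_mul_eq_mul_div, div_le_one (by positivity)]
      linarith
    linarith [hE_bound]
  set q2 : ℝ := Real.exp (-E) with hq2_def
  have hq2_pos : 0 < q2 := by rw [hq2_def]; positivity
  have hδ2 : |q2 - 1| ≤ C₂ * t := by
    have habs2 := Real.abs_exp_sub_one_le (x := -E) (by rwa [abs_neg])
    rw [hq2_def]
    refine le_trans habs2 ?_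
    rw [abs_neg]
    have hCt : C₂ * t = 2 * (4 * x * b^2 / ξ^2 * t) := by rw [hC₂_def]; ring
    rw [hCt]
    linarith [hE_bound]
  have hf2' : C₂ * t ≤ 1/2 := by
    rw [hT6_def, lt_div_iff₀ (by positivity)] at h6
    linarith
  have hf3' : C₃ * t ≤ 1/2 := by
    rw [hT7_def, lt_div_iff₀ (by positivity)] at h7
    linarith
  -- the tail estimate
  rw [hc_def] at hlm2c
  have haux := aux_tail x μ (lam t) hx hμ hlm2c
  have V_eq : ((γ t) (Set.Ici x)).toReal
      = lam t ^ μ / Real.Gamma μ * ∫ z in Ioi x, z ^ (μ - 1) * Real.exp (-(lam t * z)) := by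
    rw [hγ t ht]
    exact aux_measure_Ici μ (lam t) x hμ hlm2c hx
  set I : ℝ := ∫ z in Ioi x, z ^ (μ - 1) * Real.exp (-(lam t * z)) with hI_def
  clear_value I
  set B₀ : ℝ := lam t ^ (μ - 1) * x ^ (μ - 1) * Real.exp (-(lam t * x)) / Real.Gamma μ
    with hB₀_def
  have hB₀0 : 0 < B₀ := by
    rw [hB₀_def]; positivity
  clear_value B₀
  have hKpos : 0 < lam t ^ μ / Real.Gamma μ := by positivity
  have hpow : lam t ^ (μ - 1) = lam t ^ μ / lam t := by
    rw [Real.rpow_sub hlm0, Real.rpow_one]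
  have hlmne : lam t ≠ 0 := hlm0.ne'
  have hGne : Real.Gamma μ ≠ 0 := hG.ne'
  have hVB : |((γ t) (Set.Ici x)).toReal - B₀| ≤ C₃ * t * B₀ := by
    have e1 : ((γ t) (Set.Ici x)).toReal - B₀
        = (lam t ^ μ / Real.Gamma μ)
          * (I - x ^ (μ - 1) * Real.exp (-(lam t * x)) / lam t) := by
      rw [V_eq, hB₀_def, hpow]
      ring
    rw [e1, abs_mul, abs_of_nonneg hKpos.le]
    have step1 : (lam t ^ μ / Real.Gamma μ)
          * |I - x ^ (μ - 1) * Real.exp (-(lam t * x)) / lam t|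
        ≤ (lam t ^ μ / Real.Gamma μ) * ((2 * ((μ - 1) / x) / lam t)
          * (x ^ (μ - 1) * Real.exp (-(lam t * x)) / lam t)) :=
      mul_le_mul_of_nonneg_left haux hKpos.le
    have step2 : (lam t ^ μ / Real.Gamma μ) * ((2 * ((μ - 1) / x) / lam t)
          * (x ^ (μ - 1) * Real.exp (-(lam t * x)) / lam t))
        = (2 * ((μ - 1) / x) / lam t) * B₀ := by
      rw [hB₀_def, hpow]
      ring
    have h2le : 2 ≤ ξ^2 * t * lam t := by
      have hh := mul_le_mul_of_nonneg_left hlm_lb (by positivity : (0:ℝ) ≤ ξ^2 * t)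
      have he : ξ^2 * t * (2 / (ξ^2 * t)) = 2 := by field_simp
      rw [he] at hh
      exact hh
    have step3 : (2 * ((μ - 1) / x) / lam t) ≤ C₃ * t := by
      rw [div_le_iff₀ hlm0, hC₃_def]
      have hh := mul_le_mul_of_nonneg_left h2le
        (by positivity : (0:ℝ) ≤ (μ - 1) / x)
      calc 2 * ((μ - 1) / x) = (μ - 1) / x * 2 := by ring
        _ ≤ (μ - 1) / x * (ξ^2 * t * lam t) := hh
        _ = (μ - 1) * ξ^2 / x * t * lam t := by ring
    calc (lam t ^ μ / Real.Gamma μ)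
          * |I - x ^ (μ - 1) * Real.exp (-(lam t * x)) / lam t|
        ≤ (2 * ((μ - 1) / x) / lam t) * B₀ := by rw [← step2]; exact step1
      _ ≤ C₃ * t * B₀ := mul_le_mul_of_nonneg_right step3 hB₀0.le
  -- identify B₀ with the target
  set Tv : ℝ := Real.exp (b * x / ξ ^ 2) / Real.Gamma μ * (2 * x / ξ ^ 2) ^ (μ - 1)
      * t ^ (1 - μ) * Real.exp (-(2 * x) / (ξ ^ 2 * t)) with hTv_def
  have hTv0 : 0 < Tv := by rw [hTv_def]; positivity
  have he : (2 * x / ξ^2) * ρ / t = lam t * x := by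
    have hd1 : ξ^2 / ξ^2 = 1 := div_self (by positivity)
    have hd2 : t / t = 1 := div_self htne
    calc (2 * x / ξ^2) * ρ / t = lam t * x * (ξ^2 / ξ^2) * (t / t) := by rw [hρ_def]; ring
      _ = lam t * x := by rw [hd1, hd2]; ring
  have hrp : (2 * x / ξ^2) ^ (μ - 1) * t ^ (1 - μ) * q1 = (lam t * x) ^ (μ - 1) := by
    rw [hq1_def, ← he, Real.div_rpow (mul_nonneg (by positivity) (by linarith)) ht.le,
      Real.mul_rpow (by positivity) (by linarith : (0:ℝ) ≤ ρ),
      show (1:ℝ) - μ = -(μ - 1) by ring, Real.rpow_neg ht.le]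
    ring
  have hexp2 : Real.exp (b * x / ξ ^ 2) * Real.exp (-(2 * x) / (ξ ^ 2 * t)) * q2
      = Real.exp (-(lam t * x)) := by
    rw [hq2_def, ← Real.exp_add, ← Real.exp_add, hE_def]
    congr 1
    ring
  have hBT : B₀ = Tv * (q1 * q2) := by
    rw [hTv_def, hB₀_def, ← Real.mul_rpow hlm0.le hx.le, ← hrp, ← hexp2]
    ring
  have := aux_final (((γ t) (Set.Ici x)).toReal) B₀ Tv q1 q2 (C₁ * t) (C₂ * t) (C₃ * t)
    hTv0.le hBT hδ1 hδ2 hVB hf1' hf2' (by positivity) (by positivity) (by positivity)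
  have hring : 3 * (C₁ * t + C₂ * t + C₃ * t) * Tv = 3 * (C₁ + C₂ + C₃) * t * Tv := by ring
  rw [hring] at this
  exact this
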